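/- arXiv:1208.2388 — 2 statements merged into one kernel-verified Lean document; each statement's English description precedes it below -/
import Mathlib

section
/- For x > 0, (2/π) ∫_{-1}^{1} log|i·x^{1/2} + t| · (1 - t^2)^{1/2} dt = √(x(x+1)) − x − log(2(√(x+1) − √x)) − 1/2, where |i·x^{1/2} + t| = (x + t^2)^{1/2}. -/
open Real intervalIntegral Set Filter Topology MeasureTheory

lemma J_deriv (x : ℝ) (hx : 0 < x) {c : ℝ} (hc : c = Real.sqrt ((x+1)/x)) (t : ℝ)
    (ht : t ∈ Ioo (-1:ℝ) 1) :
    HasDerivAt (fun t => -Real.arcsin t + c * Real.arctan (c * (t / Real.sqrt (1 - t^2))))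
      (Real.sqrt (1 - t^2) / (x + t^2)) t := by
  have hc2 : c^2 = (x+1)/x := by rw [hc]; exact Real.sq_sqrt (by positivity)
  have h1 : 0 < 1 - t^2 := by nlinarith [ht.1, ht.2]
  set s : ℝ := Real.sqrt (1 - t^2) with hs
  have hspos : 0 < s := Real.sqrt_pos.2 h1
  have hs2 : s^2 = 1 - t^2 := Real.sq_sqrt h1.le
  have hxt : 0 < x + t^2 := by positivity
  have hsd' := (((hasDerivAt_pow 2 t).const_sub 1).sqrt (by rw [← hs2]; positivity))
  have hsd : HasDerivAt (fun t : ℝ => Real.sqrt (1 - t^2)) (-t / s) t := by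
    convert hsd' using 1
    push_cast
    field_simp
    ring
  have hg : HasDerivAt (fun t : ℝ => t / Real.sqrt (1 - t^2))
      ((1 * s - t * (-t / s)) / s^2) t := (hasDerivAt_id t).div hsd (ne_of_gt hspos)
  have harctan : HasDerivAt (fun t : ℝ => Real.arctan (c * (t / Real.sqrt (1 - t^2))))
      ((1 / (1 + (c * (t / s))^2)) * (c * ((1 * s - t * (-t / s)) / s^2))) t :=
    (Real.hasDerivAt_arctan _).comp t (hg.const_mul c)
  have harcsin : HasDerivAt Real.arcsin (1 / s) t := by
    have := Real.hasDerivAt_arcsin (ne_of_gt ht.1) (ne_of_lt ht.2)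
    simpa [hs] using this
  have := (harcsin.neg).add (harctan.const_mul c)
  refine this.congr_deriv (Eq.symm ?_)
  have e0 : (1 * s - t * (-t / s)) / s^2 = 1 / s^3 := by
    rw [div_eq_div_iff (by positivity) (by positivity)]
    field_simp
    linear_combination hs2
  rw [e0]
  have e1 : c * ((1 / (1 + (c * (t / s))^2)) * (c * (1 / s^3)))
      = c^2 * ((1 / (1 + c^2 * (t^2 / s^2))) * (1 / s^3)) := by ring
  rw [e1, hc2]
  have e2 : 1 + (x+1)/x * (t^2/s^2) = (x + t^2) / (x * s^2) := by
    field_simp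
    linear_combination x * hs2
  rw [e2, one_div_div]
  field_simp
  ring_nf
  linear_combination hs2

lemma sqrt_lim_top : Tendsto (fun t : ℝ => Real.sqrt (1 - t^2)) (𝓝[<] (1:ℝ)) (𝓝[>] 0) := by
  rw [tendsto_nhdsWithin_iff]
  constructor
  · have : Tendsto (fun t : ℝ => Real.sqrt (1 - t^2)) (𝓝 (1:ℝ)) (𝓝 (Real.sqrt (1 - 1^2))) :=
      (Real.continuous_sqrt.comp (by continuity)).continuousAt.tendsto
    simpa using this.mono_left nhdsWithin_le_nhds
  · filter_upwards [Ioo_mem_nhdsLT_of_mem (show (1:ℝ) ∈ Ioc 0 1 by norm_num)] with t ht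
    exact Real.sqrt_pos.2 (by nlinarith [ht.1, ht.2])

lemma sqrt_lim_bot : Tendsto (fun t : ℝ => Real.sqrt (1 - t^2)) (𝓝[>] (-1:ℝ)) (𝓝[>] 0) := by
  rw [tendsto_nhdsWithin_iff]
  constructor
  · have : Tendsto (fun t : ℝ => Real.sqrt (1 - t^2)) (𝓝 (-1:ℝ)) (𝓝 (Real.sqrt (1 - (-1:ℝ)^2))) :=
      (Real.continuous_sqrt.comp (by continuity)).continuousAt.tendsto
    simpa using this.mono_left nhdsWithin_le_nhds
  · filter_upwards [Ioo_mem_nhdsGT_of_mem (show (-1:ℝ) ∈ Ico (-1:ℝ) 0 by norm_num)] with t ht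
    exact Real.sqrt_pos.2 (by nlinarith [ht.1, ht.2])

lemma J_eval (x : ℝ) (hx : 0 < x) :
    ∫ t in (-1:ℝ)..1, Real.sqrt (1 - t^2) / (x + t^2)
      = π * (Real.sqrt (x+1) - Real.sqrt x) / Real.sqrt x := by
  set c : ℝ := Real.sqrt ((x+1)/x) with hc
  have hcpos : 0 < c := Real.sqrt_pos.2 (by positivity)
  set H : ℝ → ℝ := fun t => -Real.arcsin t + c * Real.arctan (c * (t / Real.sqrt (1 - t^2))) with hH
  have hint : IntervalIntegrable (fun t => Real.sqrt (1 - t^2) / (x + t^2)) volume (-1) 1 := by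
    apply Continuous.intervalIntegrable
    exact (Real.continuous_sqrt.comp (by continuity)).div (by continuity)
      (fun t => ne_of_gt (by positivity))
  have hgt : Tendsto (fun t : ℝ => t / Real.sqrt (1 - t^2)) (𝓝[<] (1:ℝ)) atTop := by
    simp only [div_eq_mul_inv]
    exact Filter.Tendsto.pos_mul_atTop one_pos
      (tendsto_nhdsWithin_of_tendsto_nhds tendsto_id) sqrt_lim_top.inv_tendsto_nhdsGT_zero
  have hgb : Tendsto (fun t : ℝ => t / Real.sqrt (1 - t^2)) (𝓝[>] (-1:ℝ)) atBot := by
    simp only [div_eq_mul_inv]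
    exact Filter.Tendsto.neg_mul_atTop (show (-1:ℝ) < 0 by norm_num)
      (tendsto_nhdsWithin_of_tendsto_nhds tendsto_id) sqrt_lim_bot.inv_tendsto_nhdsGT_zero
  have hHt : Tendsto H (𝓝[<] (1:ℝ)) (𝓝 (-(π/2) + c * (π/2))) := by
    apply Filter.Tendsto.add
    · have : Tendsto (fun t : ℝ => -Real.arcsin t) (𝓝 (1:ℝ)) (𝓝 (-Real.arcsin 1)) :=
        (Real.continuous_arcsin.neg).continuousAt.tendsto
      simpa [Real.arcsin_one] using this.mono_left nhdsWithin_le_nhds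
    · exact Filter.Tendsto.const_mul c
        ((Real.tendsto_arctan_atTop.mono_right nhdsWithin_le_nhds).comp
          (hgt.const_mul_atTop hcpos))
  have hHb : Tendsto H (𝓝[>] (-1:ℝ)) (𝓝 (π/2 + c * (-(π/2)))) := by
    apply Filter.Tendsto.add
    · have : Tendsto (fun t : ℝ => -Real.arcsin t) (𝓝 (-1:ℝ)) (𝓝 (-Real.arcsin (-1))) :=
        (Real.continuous_arcsin.neg).continuousAt.tendsto
      simpa [Real.arcsin_neg, Real.arcsin_one] using this.mono_left nhdsWithin_le_nhds
    · exact Filter.Tendsto.const_mul c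
        ((Real.tendsto_arctan_atBot.mono_right nhdsWithin_le_nhds).comp
          (hgb.const_mul_atBot hcpos))
  have := intervalIntegral.integral_eq_sub_of_hasDerivAt_of_tendsto (by norm_num : (-1:ℝ) < 1)
    (fun t ht => J_deriv x hx hc t ht) hint hHb hHt
  rw [this]
  have hcx : c = Real.sqrt (x+1) / Real.sqrt x := by
    rw [hc, Real.sqrt_div (by positivity)]
  rw [hcx]
  field_simp [Real.sqrt_pos.2 hx |>.ne']
  ring

set_option maxHeartbeats 1000000 in
lemma Phi_deriv (x : ℝ) (hx : 0 < x) :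
    HasDerivAt (fun y => ∫ t in (-1:ℝ)..1, (1/2) * Real.log (y + t^2) * Real.sqrt (1 - t^2))
      (π * (Real.sqrt (x+1) - Real.sqrt x) / Real.sqrt x / 2) x := by
  have hsq : Continuous (fun t : ℝ => Real.sqrt (1 - t^2)) :=
    Real.continuous_sqrt.comp (continuous_const.sub (continuous_pow 2))
  have hmeas : ∀ᶠ y in 𝓝 x, MeasureTheory.AEStronglyMeasurable
      (fun t => (1/2) * Real.log (y + t^2) * Real.sqrt (1 - t^2))
      (MeasureTheory.volume.restrict (Set.uIoc (-1:ℝ) 1)) := by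
    refine Filter.Eventually.of_forall fun y => Measurable.aestronglyMeasurable ?_
    exact ((Real.measurable_log.comp ((measurable_id.pow_const 2).const_add y)).const_mul
      (1/2)).mul hsq.measurable
  have hint : IntervalIntegrable
      (fun t => (1/2) * Real.log (x + t^2) * Real.sqrt (1 - t^2))
      MeasureTheory.volume (-1) 1 := by
    apply ContinuousOn.intervalIntegrable
    apply ContinuousOn.mul _ hsq.continuousOn
    apply ContinuousOn.mul continuousOn_const
    exact ContinuousOn.log (by fun_prop) (fun t _ => ne_of_gt (by positivity))
  have hmeas' : MeasureTheory.AEStronglyMeasurable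
      (fun t => 1/2 * ((x + t^2)⁻¹ * Real.sqrt (1 - t^2)))
      (MeasureTheory.volume.restrict (Set.uIoc (-1:ℝ) 1)) := by
    refine Continuous.aestronglyMeasurable ?_
    exact continuous_const.mul
      (((continuous_const.add (continuous_pow 2)).inv₀ fun t => ne_of_gt (by positivity : (0:ℝ) < x + t^2)).mul hsq)
  have hbound : ∀ᵐ t ∂MeasureTheory.volume, t ∈ Set.uIoc (-1:ℝ) 1 →
      ∀ y ∈ Metric.ball x (x/2), ‖1/2 * ((y + t^2)⁻¹ * Real.sqrt (1 - t^2))‖ ≤ 1/x := by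
    refine Filter.Eventually.of_forall fun t _ y hy => ?_
    have hyx : x/2 < y := by
      have := abs_sub_lt_iff.1 (mem_ball_iff_norm.1 hy)
      linarith [this.2]
    have h1 : 0 < y + t^2 := by nlinarith
    have h2 : Real.sqrt (1 - t^2) ≤ 1 := Real.sqrt_le_one.2 (by nlinarith)
    rw [Real.norm_eq_abs, abs_of_nonneg (by positivity)]
    calc 1/2 * ((y + t^2)⁻¹ * Real.sqrt (1 - t^2)) ≤ 1/2 * ((x/2)⁻¹ * 1) := by
          apply mul_le_mul_of_nonneg_left _ (by norm_num)
          exact mul_le_mul (by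
            rw [inv_le_inv₀ h1 (by positivity)]; nlinarith) h2 (Real.sqrt_nonneg _)
            (by positivity)
      _ = 1/x := by field_simp
  have hdiff : ∀ᵐ t ∂MeasureTheory.volume, t ∈ Set.uIoc (-1:ℝ) 1 →
      ∀ y ∈ Metric.ball x (x/2),
      HasDerivAt (fun y => (1/2) * Real.log (y + t^2) * Real.sqrt (1 - t^2))
        (1/2 * ((y + t^2)⁻¹ * Real.sqrt (1 - t^2))) y := by
    refine Filter.Eventually.of_forall fun t _ y hy => ?_
    have hyx : x/2 < y := by
      have := abs_sub_lt_iff.1 (mem_ball_iff_norm.1 hy)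
      linarith [this.2]
    have h1 : 0 < y + t^2 := by nlinarith
    have hlog : HasDerivAt (fun y : ℝ => Real.log (y + t^2)) ((y + t^2)⁻¹) y := by
      have := (Real.hasDerivAt_log (ne_of_gt h1)).comp y ((hasDerivAt_id y).add_const (t^2))
      simpa [Function.comp_def] using this
    have := (hlog.const_mul (1/2 : ℝ)).mul_const (Real.sqrt (1 - t^2))
    refine this.congr_deriv (Eq.symm ?_)
    ring
  have hmain := intervalIntegral.hasDerivAt_integral_of_dominated_loc_of_deriv_le
    (μ := MeasureTheory.volume) (F' := fun y t => 1/2 * ((y + t^2)⁻¹ * Real.sqrt (1 - t^2)))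
    (bound := fun _ => 1/x)
    (Metric.ball_mem_nhds x (by positivity : (0:ℝ) < x/2)) hmeas hint hmeas' hbound intervalIntegrable_const hdiff
  have heq : (∫ t in (-1:ℝ)..1, 1/2 * ((x + t^2)⁻¹ * Real.sqrt (1 - t^2)))
      = π * (Real.sqrt (x+1) - Real.sqrt x) / Real.sqrt x / 2 := by
    rw [intervalIntegral.integral_const_mul,
      show (fun t : ℝ => (x + t^2)⁻¹ * Real.sqrt (1 - t^2))
        = fun t : ℝ => Real.sqrt (1 - t^2) / (x + t^2) from funext fun t => (div_eq_inv_mul _ _).symm,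
      J_eval x hx]
    ring
  rw [heq] at hmain
  exact hmain.2

lemma R_deriv (x : ℝ) (hx : 0 < x) :
    HasDerivAt (fun y => Real.sqrt (y*(y+1)) - y - Real.log (2*(Real.sqrt (y+1) - Real.sqrt y)) - 1/2)
      ((Real.sqrt (x+1) - Real.sqrt x) / Real.sqrt x) x := by
  set a := Real.sqrt x with hA
  set b := Real.sqrt (x+1) with hB
  have hapos : 0 < a := Real.sqrt_pos.2 hx
  have hbpos : 0 < b := Real.sqrt_pos.2 (by linarith)
  have ha2 : a^2 = x := Real.sq_sqrt hx.le
  have hb2 : b^2 = x + 1 := Real.sq_sqrt (by linarith)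
  have hba : a < b := Real.sqrt_lt_sqrt hx.le (by linarith)
  have h1 : HasDerivAt (fun y : ℝ => y*(y+1)) (2*x+1) x := by
    have := (hasDerivAt_id x).mul ((hasDerivAt_id x).add_const 1)
    simp only [id_eq] at this
    refine this.congr_deriv (Eq.symm ?_); ring
  have hs1 : HasDerivAt (fun y : ℝ => Real.sqrt (y*(y+1)))
      ((2*x+1)/(2*Real.sqrt (x*(x+1)))) x := h1.sqrt (by positivity)
  have hs2 : HasDerivAt (fun y : ℝ => Real.sqrt (y+1)) (1/(2*b)) x := by
    have := ((hasDerivAt_id x).add_const 1).sqrt (by positivity : x + 1 ≠ 0)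
    simpa [hB] using this
  have hs3 : HasDerivAt Real.sqrt (1/(2*a)) x := by
    have := (hasDerivAt_id x).sqrt hx.ne'
    simpa [hA] using this
  have hinner : HasDerivAt (fun y : ℝ => 2*(Real.sqrt (y+1) - Real.sqrt y))
      (2*(1/(2*b) - 1/(2*a))) x := ((hs2.sub hs3).const_mul 2)
  have hlog : HasDerivAt (fun y : ℝ => Real.log (2*(Real.sqrt (y+1) - Real.sqrt y)))
      ((2*(1/(2*b) - 1/(2*a))) / (2*(b - a))) x := by
    have := hinner.log (ne_of_gt (by nlinarith [hba]))
    simpa [hA, hB] using this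
  have htot := ((hs1.sub (hasDerivAt_id x)).sub hlog).sub_const (1/2 : ℝ)
  have hsab : Real.sqrt (x*(x+1)) = a * b := by
    rw [hA, hB, ← Real.sqrt_mul hx.le]
  rw [hsab] at htot
  refine htot.congr_deriv (Eq.symm ?_)
  rw [eq_comm]
  have hba' : b - a ≠ 0 := sub_ne_zero.2 hba.ne'
  field_simp
  ring_nf
  linear_combination (2*a - 2*b) * hb2

lemma Phi_split (y : ℝ) (hy : 0 < y) :
    (∫ t in (-1:ℝ)..1, (1/2) * Real.log (y + t^2) * Real.sqrt (1 - t^2))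
      = (1/2)*Real.log y * (π/2)
        + (1/2) * ∫ t in (-1:ℝ)..1, Real.log (1 + t^2/y) * Real.sqrt (1 - t^2) := by
  have hsq : Continuous (fun t : ℝ => Real.sqrt (1 - t^2)) :=
    Real.continuous_sqrt.comp (continuous_const.sub (continuous_pow 2))
  have hintK : IntervalIntegrable (fun t => Real.log (1 + t^2/y) * Real.sqrt (1 - t^2))
      MeasureTheory.volume (-1) 1 := by
    apply ContinuousOn.intervalIntegrable
    apply ContinuousOn.mul _ hsq.continuousOn
    exact ContinuousOn.log (by fun_prop) (fun t _ => ne_of_gt (by positivity))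
  have hcongr : ∀ t ∈ Set.uIcc (-1:ℝ) 1,
      (1/2) * Real.log (y + t^2) * Real.sqrt (1 - t^2)
        = (1/2)*Real.log y * Real.sqrt (1 - t^2)
          + (1/2) * (Real.log (1 + t^2/y) * Real.sqrt (1 - t^2)) := by
    intro t _
    have : Real.log (y + t^2) = Real.log y + Real.log (1 + t^2/y) := by
      rw [← Real.log_mul hy.ne' (by positivity)]
      congr 1
      field_simp
    rw [this]; ring
  rw [intervalIntegral.integral_congr hcongr, intervalIntegral.integral_add
    (by apply Continuous.intervalIntegrable; exact continuous_const.mul hsq)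
    (hintK.const_mul _), intervalIntegral.integral_const_mul,
    intervalIntegral.integral_const_mul, integral_sqrt_one_sub_sq]

lemma K_lim : Tendsto (fun y => ∫ t in (-1:ℝ)..1, Real.log (1 + t^2/y) * Real.sqrt (1 - t^2))
    atTop (𝓝 0) := by
  have hsq : Continuous (fun t : ℝ => Real.sqrt (1 - t^2)) :=
    Real.continuous_sqrt.comp (continuous_const.sub (continuous_pow 2))
  apply squeeze_zero'
  · filter_upwards [eventually_gt_atTop (0:ℝ)] with y hy
    apply intervalIntegral.integral_nonneg (by norm_num)
    intro u _
    have : (0:ℝ) ≤ Real.log (1 + u^2/y) := Real.log_nonneg (by linarith [div_nonneg (sq_nonneg u) hy.le])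
    positivity
  · filter_upwards [eventually_gt_atTop (0:ℝ)] with y hy
    have hintK : IntervalIntegrable (fun t => Real.log (1 + t^2/y) * Real.sqrt (1 - t^2))
        MeasureTheory.volume (-1) 1 := by
      apply ContinuousOn.intervalIntegrable
      apply ContinuousOn.mul _ hsq.continuousOn
      exact ContinuousOn.log (by fun_prop) (fun t _ => ne_of_gt (by positivity))
    calc (∫ t in (-1:ℝ)..1, Real.log (1 + t^2/y) * Real.sqrt (1 - t^2))
        ≤ ∫ _t in (-1:ℝ)..1, 1/y := by
          apply intervalIntegral.integral_mono_on (by norm_num) hintK intervalIntegrable_const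
          intro u hu
          have h1 : Real.log (1 + u^2/y) ≤ u^2/y := by
            have := Real.log_le_sub_one_of_pos (show (0:ℝ) < 1 + u^2/y by positivity)
            simpa using this
          have h2 : Real.sqrt (1 - u^2) ≤ 1 := Real.sqrt_le_one.2 (by nlinarith)
          have h3 : u^2 ≤ 1 := by
            rcases Set.mem_Icc.1 hu with ⟨h, h'⟩; nlinarith
          calc Real.log (1 + u^2/y) * Real.sqrt (1 - u^2)
              ≤ (u^2/y) * 1 := mul_le_mul h1 h2 (Real.sqrt_nonneg _)
                (div_nonneg (sq_nonneg u) hy.le)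
            _ ≤ 1/y := by rw [mul_one]; exact div_le_div_of_nonneg_right h3 hy.le
      _ = 2/y := by rw [intervalIntegral.integral_const]; simp; ring
  · have : Tendsto (fun y : ℝ => 2/y) atTop (𝓝 0) :=
      Tendsto.div_atTop tendsto_const_nhds tendsto_id
    exact this

lemma u_eq (y : ℝ) (hy : 0 < y) :
    Real.sqrt (y*(y+1)) - y = 1/(Real.sqrt (1 + 1/y) + 1) := by
  set a := Real.sqrt y with hA
  set b := Real.sqrt (y+1) with hB
  have hapos : 0 < a := Real.sqrt_pos.2 hy
  have hbpos : 0 < b := Real.sqrt_pos.2 (by linarith)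
  have ha2 : a^2 = y := Real.sq_sqrt hy.le
  have hb2 : b^2 = y + 1 := Real.sq_sqrt (by linarith)
  have h1 : Real.sqrt (y*(y+1)) = a * b := by rw [hA, hB, ← Real.sqrt_mul hy.le]
  have h2 : Real.sqrt (1 + 1/y) = b / a := by
    rw [show (1:ℝ) + 1/y = (y+1)/y by field_simp, Real.sqrt_div (by linarith), ← hA, ← hB]
  rw [h1, h2]
  rw [div_add' _ _ _ hapos.ne', one_div_div, eq_div_iff (by positivity)]
  linear_combination b * ha2 + a * hb2

lemma u_lim : Tendsto (fun y : ℝ => Real.sqrt (y*(y+1)) - y) atTop (𝓝 (1/2)) := by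
  have h1 : Tendsto (fun y : ℝ => 1 + 1/y) atTop (𝓝 1) := by
    have := tendsto_one_div_atTop_nhds_zero_nat (𝕜 := ℝ)
    simpa using (tendsto_const_nhds (x := (1:ℝ))).add tendsto_inv_atTop_zero
  have h2 : Tendsto (fun y : ℝ => Real.sqrt (1 + 1/y) + 1) atTop (𝓝 2) := by
    have hs : Tendsto (fun y : ℝ => Real.sqrt (1 + 1/y)) atTop (𝓝 1) := by
      have := (Real.continuous_sqrt.continuousAt (x := (1:ℝ))).tendsto.comp h1
      simpa [Function.comp_def] using this
    simpa [one_add_one_eq_two] using hs.add (tendsto_const_nhds (x := (1:ℝ)))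
  have h3 : Tendsto (fun y : ℝ => 1/(Real.sqrt (1 + 1/y) + 1)) atTop (𝓝 (1/2)) :=
    tendsto_const_nhds.div h2 two_ne_zero
  apply h3.congr'
  filter_upwards [eventually_gt_atTop (0:ℝ)] with y hy
  exact (u_eq y hy).symm

lemma A_lim : Tendsto (fun y : ℝ => (1/2)*Real.log y
    - (Real.sqrt (y*(y+1)) - y - Real.log (2*(Real.sqrt (y+1) - Real.sqrt y)) - 1/2))
    atTop (𝓝 0) := by
  have hmain : Tendsto (fun y : ℝ =>
      (Real.log (2*(Real.sqrt (y*(y+1)) - y)) - (Real.sqrt (y*(y+1)) - y) + 1/2)) atTop (𝓝 0) := by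
    have h2u : Tendsto (fun y : ℝ => 2*(Real.sqrt (y*(y+1)) - y)) atTop (𝓝 1) := by
      have := u_lim.const_mul 2
      simpa using this
    have hlog : Tendsto (fun y : ℝ => Real.log (2*(Real.sqrt (y*(y+1)) - y))) atTop (𝓝 0) := by
      have := (Real.continuousAt_log (by norm_num : (1:ℝ) ≠ 0)).tendsto.comp h2u
      simpa [Function.comp_def] using this
    have := (hlog.sub u_lim).add_const (1/2 : ℝ)
    simpa using this
  apply hmain.congr'
  filter_upwards [eventually_gt_atTop (0:ℝ)] with y hy
  have hapos : 0 < Real.sqrt y := Real.sqrt_pos.2 hy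
  have hbpos : 0 < Real.sqrt (y+1) := Real.sqrt_pos.2 (by linarith)
  have hba : Real.sqrt y < Real.sqrt (y+1) := Real.sqrt_lt_sqrt hy.le (by linarith)
  have h1 : (1/2)*Real.log y = Real.log (Real.sqrt y) := by
    rw [Real.log_sqrt hy.le]; ring
  have h2 : Real.log (Real.sqrt y) + Real.log (2*(Real.sqrt (y+1) - Real.sqrt y))
      = Real.log (2*(Real.sqrt (y*(y+1)) - y)) := by
    rw [← Real.log_mul hapos.ne' (by nlinarith)]
    congr 1
    have h3 : Real.sqrt (y*(y+1)) = Real.sqrt y * Real.sqrt (y+1) := Real.sqrt_mul hy.le _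
    have h4 : Real.sqrt y * Real.sqrt y = y := Real.mul_self_sqrt hy.le
    rw [h3]; ring_nf; nlinarith [h4]
  rw [h1]
  linarith [h2]

lemma G_deriv (y : ℝ) (hy : 0 < y) :
    HasDerivAt (fun z => (2 / π) * (∫ t in (-1:ℝ)..1, (1/2) * Real.log (z + t^2) * Real.sqrt (1 - t^2))
      - (Real.sqrt (z*(z+1)) - z - Real.log (2*(Real.sqrt (z+1) - Real.sqrt z)) - 1/2)) 0 y := by
  have := ((Phi_deriv y hy).const_mul (2/π)).sub (R_deriv y hy)
  refine this.congr_deriv (Eq.symm ?_)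
  have hπ : (π:ℝ) ≠ 0 := Real.pi_ne_zero
  field_simp
  ring

theorem log_integral_semicircle (x : ℝ) (hx : 0 < x) :
    (2 / π) * ∫ t in (-1 : ℝ)..1, (1 / 2) * Real.log (x + t ^ 2) * Real.sqrt (1 - t ^ 2)
      = Real.sqrt (x * (x + 1)) - x
        - Real.log (2 * (Real.sqrt (x + 1) - Real.sqrt x)) - 1 / 2 := by
  set G : ℝ → ℝ := fun z =>
    (2 / π) * (∫ t in (-1:ℝ)..1, (1/2) * Real.log (z + t^2) * Real.sqrt (1 - t^2))
      - (Real.sqrt (z*(z+1)) - z - Real.log (2*(Real.sqrt (z+1) - Real.sqrt z)) - 1/2) with hG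
  have hconst : ∀ z, x ≤ z → G z = G x := by
    intro z hz
    have h := constant_of_has_deriv_right_zero (f := G) (a := x) (b := z)
      (fun y hy => (G_deriv y (lt_of_lt_of_le hx hy.1)).continuousAt.continuousWithinAt)
      (fun y hy => (G_deriv y (lt_of_lt_of_le hx hy.1)).hasDerivWithinAt)
    exact h z (Set.mem_Icc.2 ⟨hz, le_refl z⟩)
  have hlim : Tendsto G atTop (𝓝 0) := by
    have hlim' : Tendsto (fun y : ℝ =>
        ((1/2)*Real.log y
          - (Real.sqrt (y*(y+1)) - y - Real.log (2*(Real.sqrt (y+1) - Real.sqrt y)) - 1/2))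
        + (1/π) * ∫ t in (-1:ℝ)..1, Real.log (1 + t^2/y) * Real.sqrt (1 - t^2)) atTop (𝓝 0) := by
      have := A_lim.add (K_lim.const_mul (1/π))
      simpa using this
    apply hlim'.congr'
    filter_upwards [eventually_gt_atTop (0:ℝ)] with y hy
    rw [hG]
    simp only
    rw [Phi_split y hy]
    have hπ : (π:ℝ) ≠ 0 := Real.pi_ne_zero
    field_simp
    ring
  have htend : Tendsto G atTop (𝓝 (G x)) := by
    apply (tendsto_const_nhds (x := G x)).congr'
    filter_upwards [eventually_ge_atTop x] with z hz
    exact (hconst z hz).symm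
  have hGx : G x = 0 := tendsto_nhds_unique htend hlim
  rw [hG] at hGx
  simp only at hGx
  have : (2 / π) * ∫ t in (-1:ℝ)..1, (1/2) * Real.log (x + t^2) * Real.sqrt (1 - t^2)
      = Real.sqrt (x*(x+1)) - x - Real.log (2*(Real.sqrt (x+1) - Real.sqrt x)) - 1/2 := by
    linarith [hGx]
  exact this
end

section
/- For x > 0 and t ∈ [0, 1], the function v(t) = log(x + t) satisfies: the Chebyshev-type Fourier coefficients a_k = (2/π) ∫_0^π log(x + 1/2 + (1/2)cos θ) cos(kθ) dθ equal a_k = −(2/k) ν^k for k ≥ 1, where ν = −(2x + 1) + 2√(x² + x). -/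
open Real intervalIntegral Set Filter Topology MeasureTheory

lemma denom_pos {b : ℝ} (hb : 1 < b) (θ : ℝ) : 0 < b + Real.cos θ := by
  nlinarith [Real.neg_one_le_cos θ]

lemma FderivAux (b : ℝ) (hb : 1 < b) (θ : ℝ) (hθ : θ ∈ Ico (0:ℝ) π) :
    HasDerivAt (fun y : ℝ => (2 / Real.sqrt (b^2-1)) *
      Real.arctan (((b-1)/Real.sqrt (b^2-1)) * Real.tan (y/2)))
      (1 / (b + Real.cos θ)) θ := by
  set s := Real.sqrt (b^2-1) with hs_def
  have hs2 : s^2 = b^2 - 1 := Real.sq_sqrt (by nlinarith)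
  have hs : 0 < s := Real.sqrt_pos.2 (by nlinarith)
  have hcos : 0 < Real.cos (θ/2) := by
    apply Real.cos_pos_of_mem_Ioo
    constructor
    · linarith [hθ.1, Real.pi_pos]
    · linarith [hθ.2]
  have hden : 0 < b + Real.cos θ := denom_pos hb θ
  have h1 : HasDerivAt (fun y : ℝ => y/2) (1/2) θ := (hasDerivAt_id θ).div_const 2
  have h2 : HasDerivAt (fun y : ℝ => Real.tan (y/2)) ((1/Real.cos (θ/2)^2) * (1/2)) θ :=
    HasDerivAt.comp θ (Real.hasDerivAt_tan hcos.ne') h1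
  have h3 : HasDerivAt (fun y : ℝ => ((b-1)/s) * Real.tan (y/2))
      (((b-1)/s) * ((1/Real.cos (θ/2)^2) * (1/2))) θ := h2.const_mul _
  have h4 := (Real.hasDerivAt_arctan (((b-1)/s) * Real.tan (θ/2))).comp θ h3
  have h5 := h4.const_mul (2/s)
  refine h5.congr_deriv (Eq.symm ?_)
  have ht : Real.tan (θ/2) = Real.sin (θ/2) / Real.cos (θ/2) := Real.tan_eq_sin_div_cos _
  have hct : Real.cos θ = 2 * Real.cos (θ/2)^2 - 1 := by
    rw [show θ = 2 * (θ/2) by ring, Real.cos_two_mul]; ring_nf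
  have hst : Real.sin (θ/2)^2 = 1 - Real.cos (θ/2)^2 := by
    have := Real.sin_sq_add_cos_sq (θ/2); linarith
  rw [ht]
  field_simp
  linear_combination (Real.cos (θ/2)^2) * hs2 +
    ((b-1)^2) * hst + (-(b-1)) * hct

lemma J_zero {b : ℝ} (hb : 1 < b) :
    (∫ θ in (0:ℝ)..π, 1 / (b + Real.cos θ)) = π / Real.sqrt (b^2-1) := by
  set s := Real.sqrt (b^2-1) with hs_def
  have hs : 0 < s := Real.sqrt_pos.2 (by nlinarith)
  set F : ℝ → ℝ := fun y => (2/s) * Real.arctan (((b-1)/s) * Real.tan (y/2)) with hF_def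
  set f : ℝ → ℝ := fun θ => 1 / (b + Real.cos θ) with hf_def
  have hfc : Continuous f := by
    apply Continuous.div continuous_const (by fun_prop)
    exact fun θ => (denom_pos hb θ).ne'
  set G : ℝ → ℝ := fun y => ∫ θ in (0:ℝ)..y, f θ with hG_def
  have hGF : ∀ y ∈ Ico (0:ℝ) π, G y = F y := by
    intro y hy
    have h0 : ∫ θ in (0:ℝ)..y, f θ = F y - F 0 := by
      apply intervalIntegral.integral_eq_sub_of_hasDerivAt
      · intro θ hθ
        rw [uIcc_of_le hy.1] at hθ
        exact FderivAux b hb θ ⟨hθ.1, lt_of_le_of_lt hθ.2 hy.2⟩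
      · exact hfc.intervalIntegrable 0 y
    have hF0 : F 0 = 0 := by simp [hF_def]
    rw [hG_def]; simp only []
    rw [h0, hF0, sub_zero]
  have hGcont : Continuous G := intervalIntegral.continuous_primitive
    (fun a b => hfc.intervalIntegrable a b) 0
  have hlim1 : Tendsto G (𝓝[<] π) (𝓝 (G π)) :=
    (hGcont.tendsto π).mono_left nhdsWithin_le_nhds
  have hlimF : Tendsto F (𝓝[<] π) (𝓝 (π/s)) := by
    have h1 : Tendsto (fun y : ℝ => y/2) (𝓝[<] π) (𝓝[<] (π/2)) := by
      apply tendsto_nhdsWithin_of_tendsto_nhds_of_eventually_within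
      · exact ((continuous_id.div_const 2).tendsto π).mono_left nhdsWithin_le_nhds
      · filter_upwards [self_mem_nhdsWithin] with y hy
        simp only [mem_Iio] at hy ⊢; linarith
    have h2 : Tendsto (fun y : ℝ => Real.tan (y/2)) (𝓝[<] π) atTop :=
      Real.tendsto_tan_pi_div_two.comp h1
    have h3 : Tendsto (fun y : ℝ => ((b-1)/s) * Real.tan (y/2)) (𝓝[<] π) atTop :=
      Tendsto.const_mul_atTop (div_pos (by linarith) hs) h2
    have h4 : Tendsto (fun y : ℝ => Real.arctan (((b-1)/s) * Real.tan (y/2)))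
        (𝓝[<] π) (𝓝 (π/2)) :=
      (Real.tendsto_arctan_atTop.mono_right nhdsWithin_le_nhds).comp h3
    have h5 := h4.const_mul (2/s)
    have : (2/s) * (π/2) = π/s := by field_simp
    rw [hF_def]
    simpa [this, mul_comm] using h5
  have hlim2 : Tendsto G (𝓝[<] π) (𝓝 (π/s)) := by
    apply hlimF.congr'
    filter_upwards [Ioo_mem_nhdsLT_of_mem (⟨Real.pi_pos, le_refl π⟩ : π ∈ Ioc 0 π)]
      with y hy
    exact (hGF y ⟨hy.1.le, hy.2⟩).symm
  exact tendsto_nhds_unique hlim1 hlim2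

lemma cont_aux {b : ℝ} (hb : 1 < b) (a : ℝ) :
    Continuous fun θ : ℝ => Real.cos (a*θ) / (b + Real.cos θ) := by
  apply Continuous.div (by fun_prop) (by fun_prop)
  exact fun θ => (denom_pos hb θ).ne'

lemma int_cos_nat (n : ℕ) (hn : 1 ≤ n) :
    (∫ θ in (0:ℝ)..π, Real.cos ((n:ℝ)*θ)) = 0 := by
  have hd : ∀ θ ∈ uIcc (0:ℝ) π, HasDerivAt (fun y => Real.sin ((n:ℝ)*y) / n)
      (Real.cos ((n:ℝ)*θ)) θ := by
    intro θ _
    have h1 : HasDerivAt (fun y : ℝ => (n:ℝ)*y) (n:ℝ) θ := by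
      simpa using (hasDerivAt_id θ).const_mul (n:ℝ)
    have h2 := (Real.hasDerivAt_sin ((n:ℝ)*θ)).comp θ h1
    have h3 := h2.div_const (n:ℝ)
    have hn0 : (n:ℝ) ≠ 0 := by exact_mod_cast Nat.one_le_iff_ne_zero.1 hn
    refine h3.congr_deriv (Eq.symm ?_)
    field_simp
  rw [intervalIntegral.integral_eq_sub_of_hasDerivAt hd
    ((by fun_prop : Continuous fun θ : ℝ => Real.cos ((n:ℝ)*θ)).intervalIntegrable 0 π)]
  simp [Real.sin_nat_mul_pi]

noncomputable def Jfun (b : ℝ) (n : ℕ) : ℝ :=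
  ∫ θ in (0:ℝ)..π, Real.cos ((n:ℝ)*θ) / (b + Real.cos θ)

lemma J_one {b : ℝ} (hb : 1 < b)
    (h0 : Jfun b 0 = π / Real.sqrt (b^2-1)) :
    Jfun b 1 = π * (Real.sqrt (b^2-1) - b) / Real.sqrt (b^2-1) := by
  set s := Real.sqrt (b^2-1) with hs_def
  have hs : 0 < s := Real.sqrt_pos.2 (by nlinarith)
  have key : Jfun b 1 = (∫ θ in (0:ℝ)..π, (1:ℝ)) - b * Jfun b 0 := by
    rw [Jfun, Jfun]
    push_cast
    rw [← intervalIntegral.integral_const_mul, ← intervalIntegral.integral_sub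
      (intervalIntegrable_const) (Continuous.intervalIntegrable (u := fun θ : ℝ => b * (Real.cos (0*θ) / (b + Real.cos θ))) (continuous_const.mul (cont_aux hb 0)) 0 π)]
    apply intervalIntegral.integral_congr
    intro θ _
    have hd := (denom_pos hb θ).ne'
    simp only [one_mul, zero_mul, Real.cos_zero]
    field_simp
    ring
  rw [key, h0]
  simp only [intervalIntegral.integral_const, smul_eq_mul, mul_one, sub_zero]
  field_simp

lemma J_rec {b : ℝ} (hb : 1 < b) (n : ℕ) :
    Jfun b (n+2) = -(2*b) * Jfun b (n+1) - Jfun b n := by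
  have hint : ∀ m : ℕ, IntervalIntegrable
      (fun θ => Real.cos ((m:ℝ)*θ) / (b + Real.cos θ)) volume 0 π :=
    fun m => (cont_aux hb m).intervalIntegrable 0 π
  have key : Jfun b (n+2) = (∫ θ in (0:ℝ)..π, 2 * Real.cos (((n:ℝ)+1)*θ))
      - (2*b) * Jfun b (n+1) - Jfun b n := by
    rw [Jfun, Jfun, Jfun]
    push_cast
    rw [← intervalIntegral.integral_const_mul,
      ← intervalIntegral.integral_sub
        ((by fun_prop : Continuous fun θ : ℝ => 2 * Real.cos (((n:ℝ)+1)*θ)).intervalIntegrable 0 π)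
        (Continuous.intervalIntegrable (u := fun θ : ℝ => 2*b * (Real.cos (((n:ℝ)+1)*θ) / (b + Real.cos θ))) (continuous_const.mul (cont_aux hb (n+1))) 0 π),
      ← intervalIntegral.integral_sub]
    · apply intervalIntegral.integral_congr
      intro θ _
      have hd := (denom_pos hb θ).ne'
      have hcc : Real.cos (((n:ℝ)+2)*θ) =
          2 * Real.cos θ * Real.cos (((n:ℝ)+1)*θ) - Real.cos ((n:ℝ)*θ) := by
        have e1 : ((n:ℝ)+2)*θ = ((n:ℝ)+1)*θ + θ := by ring
        have e2 : (n:ℝ)*θ = ((n:ℝ)+1)*θ - θ := by ring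
        rw [e1, e2, Real.cos_add, Real.cos_sub]
        ring
      simp only []
      rw [hcc]
      field_simp
      ring
    · exact (((by fun_prop : Continuous fun θ : ℝ => 2 * Real.cos (((n:ℝ)+1)*θ)).intervalIntegrable 0 π)).sub
        ((continuous_const.mul (cont_aux hb (n+1))).intervalIntegrable 0 π)
    · exact hint n
  have hz : (∫ θ in (0:ℝ)..π, 2 * Real.cos (((n:ℝ)+1)*θ)) = 0 := by
    rw [intervalIntegral.integral_const_mul]
    have := int_cos_nat (n+1) (Nat.le_add_left 1 n)
    push_cast at this
    rw [this, mul_zero]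
  rw [key, hz, zero_sub]
  ring

lemma J_zero' {b : ℝ} (hb : 1 < b) : Jfun b 0 = π / Real.sqrt (b^2-1) := by
  rw [Jfun, ← J_zero hb]
  apply intervalIntegral.integral_congr
  intro θ _
  norm_num

lemma J_val {b : ℝ} (hb : 1 < b) (n : ℕ) :
    Jfun b n = π * (Real.sqrt (b^2-1) - b)^n / Real.sqrt (b^2-1) := by
  set s := Real.sqrt (b^2-1) with hs_def
  have hs2 : s^2 = b^2 - 1 := Real.sq_sqrt (by nlinarith)
  have hs : 0 < s := Real.sqrt_pos.2 (by nlinarith)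
  induction n using Nat.twoStepInduction with
  | zero => rw [J_zero' hb, ← hs_def]; field_simp
  | one => rw [J_one hb (J_zero' hb), ← hs_def]; field_simp
  | more n ih1 ih2 =>
    rw [J_rec hb n, ih1, ih2]
    field_simp
    linear_combination (-((s-b)^n)) * hs2

theorem chebyshev_fourier_log_coefficient (x : ℝ) (hx : 0 < x) (k : ℕ) (hk : 1 ≤ k) :
    (2 / π) * ∫ θ in (0 : ℝ)..π,
        Real.log (x + 1 / 2 + (1 / 2) * Real.cos θ) * Real.cos (k * θ)
      = -(2 / (k : ℝ)) * (-(2 * x + 1) + 2 * Real.sqrt (x ^ 2 + x)) ^ k := by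
  obtain ⟨m, rfl⟩ : ∃ m, k = m + 1 := ⟨k - 1, (Nat.succ_pred_eq_of_pos hk).symm⟩
  have hb : (1:ℝ) < 2*x+1 := by linarith
  set s := Real.sqrt ((2*x+1)^2-1) with hs_def
  have hs2 : s^2 = (2*x+1)^2 - 1 := Real.sq_sqrt (by nlinarith)
  have hs : 0 < s := Real.sqrt_pos.2 (by nlinarith)
  have hsx : 2 * Real.sqrt (x^2+x) = s := by
    rw [hs_def, show (2*x+1)^2 - 1 = 4*(x^2+x) by ring,
      show (4:ℝ)*(x^2+x) = 2^2*(x^2+x) by ring,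
      Real.sqrt_mul (by positivity) , Real.sqrt_sq (by norm_num : (0:ℝ) ≤ 2)]
  have hm1 : ((m:ℝ)+1) ≠ 0 := by positivity
  have hpos : ∀ θ:ℝ, 0 < x + 1/2 + (1/2)*Real.cos θ := fun θ => by
    nlinarith [Real.neg_one_le_cos θ]
  -- integration by parts
  set u : ℝ → ℝ := fun θ => Real.log (x + 1/2 + (1/2)*Real.cos θ) with hu_def
  set u' : ℝ → ℝ := fun θ => ((1/2) * (-Real.sin θ)) / (x + 1/2 + (1/2)*Real.cos θ) with hu'_def
  set v : ℝ → ℝ := fun θ => Real.sin (((m:ℝ)+1)*θ) / ((m:ℝ)+1) with hv_def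
  set v' : ℝ → ℝ := fun θ => Real.cos (((m:ℝ)+1)*θ) with hv'_def
  have hu : ∀ θ ∈ uIcc (0:ℝ) π, HasDerivAt u (u' θ) θ := by
    intro θ _
    have hin : HasDerivAt (fun y : ℝ => x + 1/2 + (1/2)*Real.cos y)
        ((1/2) * (-Real.sin θ)) θ :=
      ((Real.hasDerivAt_cos θ).const_mul (1/2)).const_add (x+1/2)
    have h := (Real.hasDerivAt_log (hpos θ).ne').comp θ hin
    refine h.congr_deriv (Eq.symm ?_)
    exact div_eq_inv_mul _ _
  have hv : ∀ θ ∈ uIcc (0:ℝ) π, HasDerivAt v (v' θ) θ := by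
    intro θ _
    have h1 : HasDerivAt (fun y : ℝ => ((m:ℝ)+1)*y) ((m:ℝ)+1) θ := by
      simpa using (hasDerivAt_id θ).const_mul ((m:ℝ)+1)
    have h2 := ((Real.hasDerivAt_sin (((m:ℝ)+1)*θ)).comp θ h1).div_const ((m:ℝ)+1)
    refine h2.congr_deriv (Eq.symm ?_)
    field_simp
    rfl
  have hu'c : Continuous u' := by
    apply Continuous.div (by fun_prop) (by fun_prop)
    exact fun θ => (hpos θ).ne'
  have hparts := intervalIntegral.integral_mul_deriv_eq_deriv_mul hu hv
    (hu'c.intervalIntegrable 0 π)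
    ((by fun_prop : Continuous v').intervalIntegrable 0 π)
  have hvpi : v π = 0 := by
    rw [hv_def]
    simp only []
    rw [show ((m:ℝ)+1)*π = ((m+1:ℕ):ℝ)*π by push_cast; ring, Real.sin_nat_mul_pi, zero_div]
  have hv0 : v 0 = 0 := by simp [hv_def]
  rw [hvpi, hv0] at hparts
  simp only [mul_zero, zero_sub, zero_mul, sub_zero, neg_neg] at hparts
  -- rewrite goal integral
  have hgoal_int : (∫ θ in (0:ℝ)..π,
      Real.log (x + 1 / 2 + (1 / 2) * Real.cos θ) * Real.cos ((↑(m+1):ℝ) * θ))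
      = ∫ θ in (0:ℝ)..π, u θ * v' θ := by
    apply intervalIntegral.integral_congr
    intro θ _
    push_cast
    rfl
  have hprod : (∫ θ in (0:ℝ)..π, u' θ * v θ)
      = (1/(2*((m:ℝ)+1))) * (Jfun (2*x+1) (m+2) - Jfun (2*x+1) m) := by
    rw [Jfun, Jfun]
    push_cast
    rw [← intervalIntegral.integral_sub ((cont_aux hb ((m:ℝ)+2)).intervalIntegrable 0 π)
      ((cont_aux hb m).intervalIntegrable 0 π),
      ← intervalIntegral.integral_const_mul]
    apply intervalIntegral.integral_congr
    intro θ _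
    have hd := (denom_pos hb θ).ne'
    have hd2 := (hpos θ).ne'
    have hps : Real.cos ((m:ℝ)*θ) - Real.cos (((m:ℝ)+2)*θ)
        = 2 * Real.sin θ * Real.sin (((m:ℝ)+1)*θ) := by
      rw [show (m:ℝ)*θ = ((m:ℝ)+1)*θ - θ by ring,
        show ((m:ℝ)+2)*θ = ((m:ℝ)+1)*θ + θ by ring, Real.cos_sub, Real.cos_add]
      ring
    simp only [hu'_def, hv_def]
    rw [show x + 1/2 + 1/2*Real.cos θ = (2*x+1+Real.cos θ)/2 from by ring]
    field_simp [hd, hm1]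
    rw [show θ * ((m:ℝ)+2) = ((m:ℝ)+2)*θ by ring]
    linear_combination hps
  rw [hgoal_int, hparts, hprod, J_val hb (m+2), J_val hb m, ← hs_def]
  rw [show -(2*x+1) + 2*Real.sqrt (x^2+x) = s - (2*x+1) from by rw [← hsx]; ring]
  have hkey : π * (s - (2*x+1)) ^ (m+2) / s - π * (s - (2*x+1)) ^ m / s
      = 2*π*(s - (2*x+1))^(m+1) := by
    field_simp
    linear_combination (-((s - (2*x+1))^m)) * hs2
  rw [hkey]
  push_cast
  field_simp
end
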